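/- arXiv:1105.2626 — 2 statements merged into one kernel-verified Lean document; each statement's English description precedes it below -/
import Mathlib

section
/- Fix R > 0 and let τ(s) = (1/s²)·(1 − 2·I₁(s·R)/(s·R·I₀(s·R))) for s > 0. Then as s → 0⁺ one has the expansion τ(s) = R²/8 − s²·R⁴/48 + 11·s⁴·R⁶/3072 + O(s⁶); that is, τ(s) − R²/8 + s²·R⁴/48 − 11·s⁴·R⁶/3072 = O(s⁶) as s → 0⁺. -/
open Asymptotics

/-- The modified Bessel function of the first kind of order zero. -/
noncomputable def besselI0 (x : ℝ) : ℝ :=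
  ∑' k : ℕ, (x / 2) ^ (2 * k) / (Nat.factorial k : ℝ) ^ 2

/-- The modified Bessel function of the first kind of order one. -/
noncomputable def besselI1 (x : ℝ) : ℝ :=
  ∑' k : ℕ, (x / 2) ^ (2 * k + 1) / ((Nat.factorial k : ℝ) * (Nat.factorial (k + 1) : ℝ))

lemma fact_ge_one' (k : ℕ) : (1 : ℝ) ≤ (Nat.factorial k : ℝ) := by
  exact_mod_cast Nat.one_le_iff_ne_zero.mpr (Nat.factorial_ne_zero k)

lemma summable_I0' (x : ℝ) :
    Summable (fun k : ℕ => (x / 2) ^ (2 * k) / (Nat.factorial k : ℝ) ^ 2) := by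
  refine Summable.of_nonneg_of_le (fun k => ?_) (fun k => ?_)
    ((Real.summable_pow_div_factorial ((x/2)^2)))
  · rw [pow_mul]; positivity
  · rw [pow_mul]
    apply div_le_div_of_nonneg_left (by positivity) (by positivity)
    nlinarith [fact_ge_one' k]

lemma summable_I1' (x : ℝ) (hx : 0 ≤ x) :
    Summable (fun k : ℕ => (x / 2) ^ (2 * k + 1) /
      ((Nat.factorial k : ℝ) * (Nat.factorial (k + 1) : ℝ))) := by
  refine Summable.of_nonneg_of_le (fun k => ?_) (fun k => ?_)
    (((Real.summable_pow_div_factorial ((x/2)^2)).mul_left (x/2)))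
  · positivity
  · have h : (x / 2) ^ (2 * k + 1) = (x/2) * ((x/2)^2) ^ k := by
      rw [pow_add, pow_mul, pow_one, mul_comm]
    rw [h, mul_div_assoc]
    apply mul_le_mul_of_nonneg_left _ (by positivity)
    apply div_le_div_of_nonneg_left (by positivity) (by positivity)
    nlinarith [fact_ge_one' k, fact_ge_one' (k+1)]

lemma I0_expand' (x : ℝ) :
    besselI0 x = 1 + x^2/4 + x^4/64 + x^6/2304 +
      ∑' k : ℕ, (x / 2) ^ (2 * (k + 4)) / (Nat.factorial (k + 4) : ℝ) ^ 2 := by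
  have h := Summable.sum_add_tsum_nat_add (f := fun k : ℕ => (x / 2) ^ (2 * k) / (Nat.factorial k : ℝ) ^ 2)
    4 (summable_I0' x)
  rw [besselI0, ← h, Finset.sum_range_succ, Finset.sum_range_succ, Finset.sum_range_succ,
    Finset.sum_range_one]
  norm_num [Nat.factorial]
  ring

lemma I1_expand' (x : ℝ) (hx : 0 ≤ x) :
    besselI1 x = x/2 + x^3/16 + x^5/384 + x^7/18432 +
      ∑' k : ℕ, (x / 2) ^ (2 * (k + 4) + 1) /
        ((Nat.factorial (k + 4) : ℝ) * (Nat.factorial (k + 5) : ℝ)) := by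
  have h := Summable.sum_add_tsum_nat_add (f := fun k : ℕ => (x / 2) ^ (2 * k + 1) /
      ((Nat.factorial k : ℝ) * (Nat.factorial (k + 1) : ℝ))) 4 (summable_I1' x hx)
  rw [besselI1, ← h, Finset.sum_range_succ, Finset.sum_range_succ, Finset.sum_range_succ,
    Finset.sum_range_one]
  norm_num [Nat.factorial]
  ring

lemma I0_tail_bound' (x : ℝ) (hx0 : 0 ≤ x) (hx1 : x ≤ 1) :
    (∑' k : ℕ, (x / 2) ^ (2 * (k + 4)) / (Nat.factorial (k + 4) : ℝ) ^ 2) ≤ 4/3 * x^8 := by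
  have hsum : Summable (fun k : ℕ =>
      (x / 2) ^ (2 * (k + 4)) / (Nat.factorial (k + 4) : ℝ) ^ 2) := by
    exact_mod_cast (summable_nat_add_iff 4).2 (summable_I0' x)
  have hgeo : Summable (fun k : ℕ => x^8 * (1/4 : ℝ)^k) :=
    (summable_geometric_of_lt_one (by norm_num) (by norm_num)).mul_left _
  have hle : ∀ k : ℕ, (x / 2) ^ (2 * (k + 4)) / (Nat.factorial (k + 4) : ℝ) ^ 2
      ≤ x^8 * (1/4 : ℝ)^k := by
    intro k
    have h1 : (x / 2) ^ (2 * (k + 4)) = (x^2/4)^4 * ((x/2)^2) ^ k := by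
      rw [pow_mul, pow_add]
      ring_nf
    have h2 : ((x/2)^2 : ℝ) ^ k ≤ (1/4 : ℝ)^k := by
      apply pow_le_pow_left₀ (by positivity)
      nlinarith
    have h3 : (x^2/4 : ℝ)^4 ≤ x^8 := by
      have he : (x^2/4 : ℝ)^4 = x^8/256 := by ring
      rw [he]
      linarith [pow_nonneg hx0 8]
    calc (x / 2) ^ (2 * (k + 4)) / (Nat.factorial (k + 4) : ℝ) ^ 2
        ≤ (x / 2) ^ (2 * (k + 4)) := by
          apply div_le_self (by rw [pow_mul]; positivity)
          nlinarith [fact_ge_one' (k+4)]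
      _ = (x^2/4)^4 * ((x/2)^2) ^ k := h1
      _ ≤ x^8 * (1/4 : ℝ)^k := by
          apply mul_le_mul h3 h2 (by positivity) (by positivity)
  calc (∑' k : ℕ, (x / 2) ^ (2 * (k + 4)) / (Nat.factorial (k + 4) : ℝ) ^ 2)
      ≤ ∑' k : ℕ, x^8 * (1/4 : ℝ)^k := Summable.tsum_le_tsum hle hsum hgeo
    _ = x^8 * (4/3) := by
        rw [tsum_mul_left, tsum_geometric_of_lt_one (by norm_num) (by norm_num)]
        norm_num
    _ = 4/3 * x^8 := by ring

lemma I0_tail_nonneg' (x : ℝ) :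
    0 ≤ ∑' k : ℕ, (x / 2) ^ (2 * (k + 4)) / (Nat.factorial (k + 4) : ℝ) ^ 2 := by
  apply tsum_nonneg
  intro k
  rw [pow_mul]
  positivity

lemma I1_tail_bound' (x : ℝ) (hx0 : 0 ≤ x) (hx1 : x ≤ 1) :
    (∑' k : ℕ, (x / 2) ^ (2 * (k + 4) + 1) /
      ((Nat.factorial (k + 4) : ℝ) * (Nat.factorial (k + 5) : ℝ))) ≤ 4/3 * x^9 := by
  have hsum : Summable (fun k : ℕ => (x / 2) ^ (2 * (k + 4) + 1) /
      ((Nat.factorial (k + 4) : ℝ) * (Nat.factorial (k + 5) : ℝ))) := by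
    have := (summable_nat_add_iff (f := fun k : ℕ => (x / 2) ^ (2 * k + 1) /
      ((Nat.factorial k : ℝ) * (Nat.factorial (k + 1) : ℝ))) 4).2 (summable_I1' x hx0)
    exact this
  have hgeo : Summable (fun k : ℕ => x^9 * (1/4 : ℝ)^k) :=
    (summable_geometric_of_lt_one (by norm_num) (by norm_num)).mul_left _
  have hle : ∀ k : ℕ, (x / 2) ^ (2 * (k + 4) + 1) /
      ((Nat.factorial (k + 4) : ℝ) * (Nat.factorial (k + 5) : ℝ)) ≤ x^9 * (1/4 : ℝ)^k := by
    intro k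
    have h1 : (x / 2) ^ (2 * (k + 4) + 1) = (x/2)^9 * ((x/2)^2) ^ k := by
      rw [pow_add, pow_mul, pow_add]
      ring_nf
    have h2 : ((x/2)^2 : ℝ) ^ k ≤ (1/4 : ℝ)^k := by
      apply pow_le_pow_left₀ (by positivity)
      nlinarith
    have h3 : ((x/2) : ℝ)^9 ≤ x^9 := by
      apply pow_le_pow_left₀ (by positivity)
      nlinarith
    calc (x / 2) ^ (2 * (k + 4) + 1) /
          ((Nat.factorial (k + 4) : ℝ) * (Nat.factorial (k + 5) : ℝ))
        ≤ (x / 2) ^ (2 * (k + 4) + 1) := by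
          apply div_le_self (by positivity)
          nlinarith [fact_ge_one' (k+4), fact_ge_one' (k+5)]
      _ = (x/2)^9 * ((x/2)^2) ^ k := h1
      _ ≤ x^9 * (1/4 : ℝ)^k := by
          apply mul_le_mul h3 h2 (by positivity) (by positivity)
  calc (∑' k : ℕ, (x / 2) ^ (2 * (k + 4) + 1) /
        ((Nat.factorial (k + 4) : ℝ) * (Nat.factorial (k + 5) : ℝ)))
      ≤ ∑' k : ℕ, x^9 * (1/4 : ℝ)^k := Summable.tsum_le_tsum hle hsum hgeo
    _ = x^9 * (4/3) := by
        rw [tsum_mul_left, tsum_geometric_of_lt_one (by norm_num) (by norm_num)]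
        norm_num
    _ = 4/3 * x^9 := by ring

lemma I1_tail_nonneg' (x : ℝ) (hx0 : 0 ≤ x) :
    0 ≤ ∑' k : ℕ, (x / 2) ^ (2 * (k + 4) + 1) /
      ((Nat.factorial (k + 4) : ℝ) * (Nat.factorial (k + 5) : ℝ)) := by
  apply tsum_nonneg
  intro k
  positivity

lemma I0_ge_one' (x : ℝ) : 1 ≤ besselI0 x := by
  have h := Summable.le_tsum (summable_I0' x) 0 (fun i _ => by rw [pow_mul]; positivity)
  simpa [besselI0] using h
lemma Ebound_aux' (x r0 r1 : ℝ) (hx0 : 0 < x) (hx1 : x ≤ 1)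
    (hr0a : 0 ≤ r0) (hr0b : r0 ≤ 4/3 * x^8)
    (hr1a : 0 ≤ r1) (hr1b : r1 ≤ 4/3 * x^9) :
    |(-(23/36864)*x^9 - (83/1769472)*x^11 - (11/7077888)*x^13
      + (x - x^3 * (1/8 - x^2/48 + 11/3072 * x^4)) * r0 - 2 * r1 : ℝ)| ≤ 7 * x^9 := by
  have hx9 : (0:ℝ) < x^9 := by positivity
  have hx11 : x^11 ≤ x^9 := pow_le_pow_of_le_one hx0.le hx1 (by norm_num)
  have hx13 : x^13 ≤ x^9 := pow_le_pow_of_le_one hx0.le hx1 (by norm_num)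
  have hx11' : (0:ℝ) ≤ x^11 := by positivity
  have hx13' : (0:ℝ) ≤ x^13 := by positivity
  have hx3 : x^3 ≤ x := by
    have := pow_le_pow_of_le_one hx0.le hx1 (show 1 ≤ 3 by norm_num)
    simpa using this
  have hP1 : (0:ℝ) ≤ 1/8 - x^2/48 + 11/3072 * x^4 := by nlinarith [sq_nonneg x, pow_nonneg hx0.le 4]
  have hP2 : (1/8 - x^2/48 + 11/3072 * x^4 : ℝ) ≤ 1 := by nlinarith [sq_nonneg x, pow_nonneg hx0.le 4]
  have hq : 0 ≤ x^3 * (1 - (1/8 - x^2/48 + 11/3072 * x^4)) :=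
    mul_nonneg (by positivity) (by linarith)
  have hq2 : 0 ≤ x^3 * (1/8 - x^2/48 + 11/3072 * x^4) :=
    mul_nonneg (by positivity) hP1
  have hc0 : 0 ≤ x - x^3 * (1/8 - x^2/48 + 11/3072 * x^4) := by nlinarith
  have hcx : x - x^3 * (1/8 - x^2/48 + 11/3072 * x^4) ≤ x := by linarith
  have hcr0u : (x - x^3 * (1/8 - x^2/48 + 11/3072 * x^4)) * r0 ≤ 4/3 * x^9 := by
    calc (x - x^3 * (1/8 - x^2/48 + 11/3072 * x^4)) * r0 ≤ x * r0 :=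
          mul_le_mul_of_nonneg_right hcx hr0a
      _ ≤ x * (4/3 * x^8) := mul_le_mul_of_nonneg_left hr0b hx0.le
      _ = 4/3 * x^9 := by ring
  have hcr0l : 0 ≤ (x - x^3 * (1/8 - x^2/48 + 11/3072 * x^4)) * r0 :=
    mul_nonneg hc0 hr0a
  rw [abs_le]
  constructor <;> linarith
/-- Small-`s` expansion of `τ(s) = (1/s²)(1 − 2 I₁(sR)/(sR I₀(sR)))`:
`τ(s) = R²/8 − s²R⁴/48 + 11 s⁴R⁶/3072 + O(s⁶)` as `s → 0⁺`. -/
theorem disk_laplace_survival_small_s_expansion (R : ℝ) (hR : 0 < R)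
    (τ : ℝ → ℝ)
    (hτ : ∀ s : ℝ, 0 < s →
      τ s = 1 / s ^ 2 * (1 - 2 * besselI1 (s * R) / (s * R * besselI0 (s * R)))) :
    (fun s : ℝ => τ s - R ^ 2 / 8 + s ^ 2 * R ^ 4 / 48 - 11 * s ^ 4 * R ^ 6 / 3072)
      =O[nhdsWithin 0 (Set.Ioi 0)] fun s : ℝ => s ^ 6 := by
  rw [isBigO_iff]
  refine ⟨7 * R ^ 8, ?_⟩
  have hmem : Set.Ioo (0:ℝ) (1/R) ∈ nhdsWithin 0 (Set.Ioi 0) :=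
    Ioo_mem_nhdsGT (by positivity)
  filter_upwards [hmem] with s hs
  obtain ⟨hs0, hs1⟩ := hs
  set x := s * R with hxdef
  have hx0 : 0 < x := by positivity
  have hx1 : x ≤ 1 := by
    rw [hxdef]
    exact le_of_lt ((lt_div_iff₀ hR).mp hs1)
  set r0 := ∑' k : ℕ, (x / 2) ^ (2 * (k + 4)) / (Nat.factorial (k + 4) : ℝ) ^ 2 with hr0def
  set r1 := ∑' k : ℕ, (x / 2) ^ (2 * (k + 4) + 1) /
      ((Nat.factorial (k + 4) : ℝ) * (Nat.factorial (k + 5) : ℝ)) with hr1def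
  have e0 : besselI0 x = 1 + x^2/4 + x^4/64 + x^6/2304 + r0 := I0_expand' x
  have e1 : besselI1 x = x/2 + x^3/16 + x^5/384 + x^7/18432 + r1 := I1_expand' x hx0.le
  have hr0a : 0 ≤ r0 := I0_tail_nonneg' x
  have hr0b : r0 ≤ 4/3 * x^8 := I0_tail_bound' x hx0.le hx1
  have hr1a : 0 ≤ r1 := I1_tail_nonneg' x hx0.le
  have hr1b : r1 ≤ 4/3 * x^9 := I1_tail_bound' x hx0.le hx1
  have hI0ge : 1 ≤ besselI0 x := I0_ge_one' x
  have hI0pos : 0 < besselI0 x := lt_of_lt_of_le one_pos hI0ge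
  clear_value r0 r1
  set E : ℝ := x * besselI0 x - 2 * besselI1 x
      - x^3 * (1/8 - x^2/48 + 11/3072 * x^4) * besselI0 x with hEdef
  have hI0ne : besselI0 (s * R) ≠ 0 := by rw [← hxdef]; exact hI0pos.ne'
  have hkey : τ s - R ^ 2 / 8 + s ^ 2 * R ^ 4 / 48 - 11 * s ^ 4 * R ^ 6 / 3072
      = R^2 * E / (x^3 * besselI0 x) := by
    rw [hτ s hs0, hEdef, hxdef]
    field_simp
    ring
  have hE : E = -(23/36864)*x^9 - (83/1769472)*x^11 - (11/7077888)*x^13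
      + (x - x^3 * (1/8 - x^2/48 + 11/3072 * x^4)) * r0 - 2 * r1 := by
    rw [hEdef, e0, e1]; ring
  have hEbound : |E| ≤ 7 * x^9 := by
    rw [hE]
    exact Ebound_aux' x r0 r1 hx0 hx1 hr0a hr0b hr1a hr1b
  rw [hkey]
  simp only [Real.norm_eq_abs]
  have hden : (0:ℝ) < x^3 * besselI0 x := by positivity
  rw [abs_div, abs_of_pos hden, abs_mul, abs_of_pos (by positivity : (0:ℝ) < R^2)]
  rw [div_le_iff₀ hden]
  have h1 : R^2 * |E| ≤ R^2 * (7 * x^9) :=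
    mul_le_mul_of_nonneg_left hEbound (by positivity)
  have h2 : R^2 * (7 * x^9) ≤ 7 * R^8 * |s^6| * (x^3 * besselI0 x) := by
    have habs : |s^6| = s^6 := abs_of_pos (by positivity)
    rw [habs]
    calc R^2 * (7 * x^9) = 7 * R^8 * s^6 * (x^3 * 1) := by
          rw [hxdef]; ring
      _ ≤ 7 * R^8 * s^6 * (x^3 * besselI0 x) := by
          apply mul_le_mul_of_nonneg_left _ (by positivity)
          exact mul_le_mul_of_nonneg_left hI0ge (by positivity)
  linarith
end

section
/- The modified Bessel function I₀ has the leading large-argument asymptotics I₀(x) ~ eˣ/√(2πx); that is, lim_{x→+∞} √(2πx)·e^{−x}·I₀(x) = 1. -/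
open Filter

open Real MeasureTheory intervalIntegral

lemma besselSummable (x : ℝ) :
    Summable fun k : ℕ => (x / 2) ^ (2 * k) / (Nat.factorial k : ℝ) ^ 2 := by
  refine Summable.of_nonneg_of_le (fun k => by rw [pow_mul]; positivity) (fun k => ?_)
    (Real.summable_pow_div_factorial ((x/2)^2))
  · rw [pow_mul]
    apply div_le_div_of_nonneg_left (by positivity) (by positivity)
    calc (Nat.factorial k : ℝ) = Nat.factorial k * 1 := by ring
    _ ≤ (Nat.factorial k : ℝ)^2 := by
        rw [sq]
        exact mul_le_mul_of_nonneg_left (by exact_mod_cast Nat.one_le_iff_ne_zero.2 (Nat.factorial_ne_zero k)) (by positivity)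

lemma expSummable (x : ℝ) (θ : ℝ) :
    Summable fun n : ℕ => (x * Real.cos θ) ^ n / (Nat.factorial n : ℝ) :=
  Real.summable_pow_div_factorial _

lemma exp_eq_tsum' (y : ℝ) : Real.exp y = ∑' n : ℕ, y ^ n / (Nat.factorial n : ℝ) := by
  rw [Real.exp_eq_exp_ℝ, NormedSpace.exp_eq_tsum_div]

lemma intCosEven (k : ℕ) :
    ∫ θ in (0:ℝ)..π, Real.cos θ ^ (2 * k)
      = π * (Nat.factorial (2 * k)) / (4 ^ k * (Nat.factorial k : ℝ) ^ 2) := by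
  induction k with
  | zero => simp
  | succ k ih =>
    have h2 : 2 * (k + 1) = 2 * k + 2 := by ring
    rw [h2, integral_cos_pow, ih]
    simp only [Real.sin_pi, Real.sin_zero, mul_zero, zero_mul]
    have hk1 : ((2 * k : ℕ) : ℝ) = 2 * k := by push_cast; ring
    have hf : (Nat.factorial (2 * (k+1)) : ℝ) = (2*k+2) * (2*k+1) * Nat.factorial (2*k) := by
      rw [show 2 * (k+1) = (2*k+1) + 1 by ring, Nat.factorial_succ, Nat.factorial_succ]
      push_cast; ring
    have hf2 : (Nat.factorial (k+1) : ℝ) = (k+1) * Nat.factorial k := by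
      rw [Nat.factorial_succ]; push_cast; ring
    have hkfac : (0:ℝ) < Nat.factorial k := by positivity
    rw [show (2*k+2) = 2*(k+1) by ring, hf, hf2, hk1]
    field_simp
    ring

lemma intCosOdd (k : ℕ) : ∫ θ in (0:ℝ)..π, Real.cos θ ^ (2 * k + 1) = 0 := by
  induction k with
  | zero => simp
  | succ k ih =>
    have h2 : 2 * (k + 1) + 1 = (2 * k + 1) + 2 := by ring
    rw [h2, integral_cos_pow, ih]
    simp

lemma besselRepr(x : ℝ) :
    (∫ θ in (0:ℝ)..π, Real.exp (x * Real.cos θ)) = π * besselI0 x := by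
  have h4 : ∀ k : ℕ, (4:ℝ)^k = 2^(2*k) := fun k => by rw [pow_mul]; norm_num
  set f : ℕ → ℝ → ℝ := fun n θ => (x * Real.cos θ) ^ n / (Nat.factorial n : ℝ) with hf
  have habs : ∀ n θ, |f n θ| ≤ |x| ^ n / (Nat.factorial n : ℝ) := by
    intro n θ
    rw [hf]
    simp only [abs_div, abs_pow, abs_mul, Nat.abs_cast]
    apply div_le_div_of_nonneg_right _ (by positivity)
    · exact pow_le_pow_left₀ (by positivity) (by
        nlinarith [abs_cos_le_one θ, abs_nonneg x]) n
  rw [intervalIntegral.integral_of_le Real.pi_pos.le]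
  have hrw : ∀ θ : ℝ, Real.exp (x * Real.cos θ) = ∑' n, f n θ := fun θ => exp_eq_tsum' _
  simp_rw [hrw]
  rw [MeasureTheory.integral_tsum]
  · -- compute each integral and sum
    have hcn : ∀ n, (∫ θ in Set.Ioc (0:ℝ) π, f n θ)
        = x ^ n / (Nat.factorial n : ℝ) * ∫ θ in (0:ℝ)..π, Real.cos θ ^ n := by
      intro n
      rw [← intervalIntegral.integral_of_le Real.pi_pos.le]
      have : ∀ θ : ℝ, f n θ = x ^ n / (Nat.factorial n : ℝ) * Real.cos θ ^ n := by
        intro θ; rw [hf]; simp only; rw [mul_pow]; ring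
      simp_rw [this, intervalIntegral.integral_const_mul]
    simp_rw [hcn]
    have heven : ∀ k : ℕ, x ^ (2*k) / (Nat.factorial (2*k) : ℝ) * ∫ θ in (0:ℝ)..π, Real.cos θ ^ (2*k)
        = π * ((x/2) ^ (2*k) / (Nat.factorial k : ℝ)^2) := by
      intro k
      rw [intCosEven, div_pow, h4, pow_mul, pow_mul]
      have h1 : (0:ℝ) < Nat.factorial (2*k) := by positivity
      have h2 : (0:ℝ) < Nat.factorial k := by positivity
      field_simp
    have hodd : ∀ k : ℕ, x ^ (2*k+1) / (Nat.factorial (2*k+1) : ℝ) * ∫ θ in (0:ℝ)..π, Real.cos θ ^ (2*k+1)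
        = 0 := by
      intro k; rw [intCosOdd, mul_zero]
    rw [← tsum_even_add_odd]
    · simp_rw [heven, hodd, tsum_zero, add_zero, tsum_mul_left, besselI0]
    · simp_rw [heven]
      exact ((besselSummable x).mul_left π)
    · simp_rw [hodd]
      exact summable_zero
  · intro n
    exact (Continuous.aestronglyMeasurable (by fun_prop))
  · have hb : ∀ n : ℕ, (∫⁻ θ in Set.Ioc (0:ℝ) π, ‖f n θ‖₊)
        ≤ ENNReal.ofReal (|x| ^ n / (Nat.factorial n : ℝ) * π) := by
      intro n
      calc (∫⁻ θ in Set.Ioc (0:ℝ) π, ‖f n θ‖₊)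
          ≤ ∫⁻ _ in Set.Ioc (0:ℝ) π, ENNReal.ofReal (|x| ^ n / (Nat.factorial n : ℝ)) := by
            apply MeasureTheory.lintegral_mono
            intro θ
            simp only
            rw [← enorm_eq_nnnorm, Real.enorm_eq_ofReal_abs]
            exact ENNReal.ofReal_le_ofReal (habs n θ)
        _ = ENNReal.ofReal (|x| ^ n / (Nat.factorial n : ℝ)) * ENNReal.ofReal π := by
            rw [MeasureTheory.setLIntegral_const, Real.volume_Ioc, sub_zero]
        _ = ENNReal.ofReal (|x| ^ n / (Nat.factorial n : ℝ) * π) := by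
            rw [ENNReal.ofReal_mul (by positivity)]
    have hle : (∑' n, ∫⁻ θ in Set.Ioc (0:ℝ) π, ‖f n θ‖₊)
        ≤ ENNReal.ofReal (∑' n : ℕ, |x| ^ n / (Nat.factorial n : ℝ) * π) := by
      calc (∑' n, ∫⁻ θ in Set.Ioc (0:ℝ) π, ‖f n θ‖₊)
          ≤ ∑' n : ℕ, ENNReal.ofReal (|x| ^ n / (Nat.factorial n : ℝ) * π) :=
            ENNReal.tsum_le_tsum hb
        _ = ENNReal.ofReal (∑' n : ℕ, |x| ^ n / (Nat.factorial n : ℝ) * π) := by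
            rw [ENNReal.ofReal_tsum_of_nonneg (fun n => by positivity)
              ((Real.summable_pow_div_factorial _).mul_right π)]
    exact ne_top_of_le_ne_top ENNReal.ofReal_ne_top hle

lemma sqrtTendsto : Tendsto Real.sqrt atTop atTop := by
  apply tendsto_atTop_atTop.2
  intro b
  exact ⟨b^2, fun x hx =>
    le_trans (le_trans (le_abs_self b) (Real.sqrt_sq_eq_abs b).symm.le) (Real.sqrt_le_sqrt hx)⟩

lemma sinDivTendsto : Tendsto (fun y : ℝ => Real.sin y / y) (nhdsWithin 0 {(0:ℝ)}ᶜ) (nhds 1) := by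
  have h := hasDerivAt_iff_tendsto_slope.1 (Real.hasDerivAt_sin 0)
  rw [Real.cos_zero] at h
  apply h.congr'
  filter_upwards [self_mem_nhdsWithin] with y hy
  simp [slope_def_field, Real.sin_zero]

/-- Leading large-argument asymptotics `I₀(x) ~ eˣ/√(2πx)`, i.e.
`lim_{x→+∞} √(2πx)·e^{−x}·I₀(x) = 1`. -/
theorem besselI0_asymptotics :
    Tendsto (fun x : ℝ => Real.sqrt (2 * Real.pi * x) * Real.exp (-x) * besselI0 x)
      atTop (nhds 1) := by
  have hπ := Real.pi_pos
  set g : ℝ → ℝ → ℝ := fun x t => Set.indicator (Set.Ioc 0 (π * Real.sqrt x))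
      (fun t => Real.exp (-(x * (1 - Real.cos (t / Real.sqrt x))))) t with hg
  -- dominated convergence
  have key : Tendsto (fun x => ∫ t in Set.Ioi (0:ℝ), g x t) atTop
      (nhds (∫ t in Set.Ioi (0:ℝ), Real.exp (-((1:ℝ)/2 * t^2)))) := by
    apply MeasureTheory.tendsto_integral_filter_of_dominated_convergence
      (fun t => Real.exp (-(2/π^2) * t^2))
    · exact Eventually.of_forall fun x =>
        ((Continuous.aestronglyMeasurable (by fun_prop)).indicator measurableSet_Ioc)
    · filter_upwards [eventually_ge_atTop (1:ℝ)] with x hx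
      apply ae_of_all
      intro t
      by_cases ht : t ∈ Set.Ioc (0:ℝ) (π * Real.sqrt x)
      · rw [hg]
        simp only [Set.indicator_of_mem ht]
        rw [Real.norm_eq_abs, Real.abs_exp]
        apply Real.exp_le_exp.2
        have hx0 : (0:ℝ) < x := lt_of_lt_of_le one_pos hx
        have hs : (0:ℝ) < Real.sqrt x := Real.sqrt_pos.2 hx0
        set u := t / Real.sqrt x with hu
        have hu0 : 0 < u := div_pos ht.1 hs
        have huπ : u ≤ π := by
          rw [hu, div_le_iff₀ hs]
          calc t ≤ π * Real.sqrt x := ht.2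
          _ = π * Real.sqrt x := rfl
        have hcos : Real.cos u ≤ 1 - 2/π^2 * u^2 :=
          Real.cos_le_one_sub_mul_cos_sq (by rw [abs_of_pos hu0]; exact huπ)
        have h1 : 2/π^2 * t^2 ≤ x * (1 - Real.cos u) := by
          have h2 : x * (2/π^2 * u^2) ≤ x * (1 - Real.cos u) :=
            mul_le_mul_of_nonneg_left (by linarith) hx0.le
          calc 2/π^2 * t^2 = x * (2/π^2 * u^2) := by
                rw [hu, div_pow, Real.sq_sqrt hx0.le]
                field_simp
              _ ≤ x * (1 - Real.cos u) := h2
        linarith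
      · rw [hg]
        simp only [Set.indicator_of_notMem ht]
        simp only [norm_zero]
        positivity
    · exact integrableOn_Ioi_exp_neg_mul_sq_iff.2 (by positivity)
    · rw [MeasureTheory.ae_restrict_iff' measurableSet_Ioi]
      apply ae_of_all
      intro t ht
      replace ht : 0 < t := ht
      -- eventually g x t = exp(-(t^2/2 * (sin y / y)^2)) with y = t/(2√x)
      have hev : ∀ᶠ x in atTop, g x t
          = Real.exp (-(t^2/2 * (Real.sin (t/(2*Real.sqrt x)) / (t/(2*Real.sqrt x)))^2)) := by
        filter_upwards [eventually_ge_atTop ((t/π)^2), eventually_ge_atTop (1:ℝ)] with x hx1 hx2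
        have hx0 : (0:ℝ) < x := lt_of_lt_of_le one_pos hx2
        have hs : (0:ℝ) < Real.sqrt x := Real.sqrt_pos.2 hx0
        have htmem : t ∈ Set.Ioc (0:ℝ) (π * Real.sqrt x) := by
          constructor
          · exact ht
          · have : t/π ≤ Real.sqrt x := by
              calc t/π ≤ |t/π| := le_abs_self _
              _ = Real.sqrt ((t/π)^2) := (Real.sqrt_sq_eq_abs _).symm
              _ ≤ Real.sqrt x := Real.sqrt_le_sqrt hx1
            calc t = π * (t/π) := by field_simp
            _ ≤ π * Real.sqrt x := mul_le_mul_of_nonneg_left this hπ.le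
        rw [hg]
        simp only [Set.indicator_of_mem htmem]
        congr 1
        have hy0 : t/(2*Real.sqrt x) ≠ 0 := by positivity
        have hid : 1 - Real.cos (t / Real.sqrt x) = 2 * Real.sin (t/(2*Real.sqrt x))^2 := by
          have := Real.sin_sq_eq_half_sub (t/(2*Real.sqrt x))
          rw [show 2 * (t/(2*Real.sqrt x)) = t / Real.sqrt x by field_simp] at this
          linarith
        rw [hid]
        have hsq : Real.sqrt x * Real.sqrt x = x := Real.mul_self_sqrt hx0.le
        field_simp
        ring_nf
        rw [Real.sq_sqrt hx0.le]
      have hlim : Tendsto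
          (fun x => Real.exp (-(t^2/2 * (Real.sin (t/(2*Real.sqrt x)) / (t/(2*Real.sqrt x)))^2)))
          atTop (nhds (Real.exp (-((1:ℝ)/2 * t^2)))) := by
        have hy : Tendsto (fun x : ℝ => t/(2*Real.sqrt x)) atTop (nhdsWithin 0 {(0:ℝ)}ᶜ) := by
          apply tendsto_nhdsWithin_of_tendsto_nhds_of_eventually_within
          · exact Tendsto.div_atTop tendsto_const_nhds
              (Tendsto.const_mul_atTop two_pos sqrtTendsto)
          · filter_upwards [eventually_ge_atTop (1:ℝ)] with x hx
            have hs : (0:ℝ) < Real.sqrt x := Real.sqrt_pos.2 (lt_of_lt_of_le one_pos hx)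
            simp only [Set.mem_compl_iff, Set.mem_singleton_iff]
            positivity
        have hcomp : Tendsto
            (fun x : ℝ => Real.sin (t/(2*Real.sqrt x)) / (t/(2*Real.sqrt x)))
            atTop (nhds 1) := sinDivTendsto.comp hy
        have : Tendsto
            (fun x : ℝ => -(t^2/2 * (Real.sin (t/(2*Real.sqrt x)) / (t/(2*Real.sqrt x)))^2))
            atTop (nhds (-(t^2/2 * 1^2))) :=
          (((hcomp.pow 2).const_mul (t^2/2)).neg)
        have h2 := (Real.continuous_exp.tendsto _).comp this
        rw [show -(t^2/2 * 1^2) = -((1:ℝ)/2 * t^2) by ring] at h2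
        exact h2
      exact Tendsto.congr' (Filter.EventuallyEq.symm hev) hlim
  -- rewrite the target function eventually
  have hF : ∀ᶠ x in atTop,
      Real.sqrt (2 * π * x) * Real.exp (-x) * besselI0 x
        = Real.sqrt (2/π) * ∫ t in Set.Ioi (0:ℝ), g x t := by
    filter_upwards [eventually_gt_atTop (0:ℝ)] with x hx
    have hs : (0:ℝ) < Real.sqrt x := Real.sqrt_pos.2 hx
    have hint : (∫ t in Set.Ioi (0:ℝ), g x t)
        = ∫ t in (0:ℝ)..(π * Real.sqrt x), Real.exp (-(x * (1 - Real.cos (t / Real.sqrt x)))) := by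
      rw [hg]
      rw [MeasureTheory.integral_indicator measurableSet_Ioc]
      rw [Measure.restrict_restrict measurableSet_Ioc,
        Set.inter_eq_left.2 Set.Ioc_subset_Ioi_self]
      rw [intervalIntegral.integral_of_le (by positivity)]
    have hsub : (∫ t in (0:ℝ)..(π * Real.sqrt x), Real.exp (-(x * (1 - Real.cos (t / Real.sqrt x)))))
        = Real.sqrt x * ∫ θ in (0:ℝ)..π, Real.exp (-(x * (1 - Real.cos θ))) := by
      rw [intervalIntegral.integral_comp_div (f := fun θ => Real.exp (-(x * (1 - Real.cos θ)))) hs.ne']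
      rw [zero_div, mul_div_assoc, div_self hs.ne', mul_one, smul_eq_mul]
    have hexp : (∫ θ in (0:ℝ)..π, Real.exp (-(x * (1 - Real.cos θ))))
        = Real.exp (-x) * (π * besselI0 x) := by
      rw [← besselRepr x, ← intervalIntegral.integral_const_mul]
      congr 1
      funext θ
      rw [← Real.exp_add]
      congr 1
      ring
    rw [hint, hsub, hexp]
    have hsqrt : Real.sqrt (2 * π * x) = Real.sqrt (2/π) * Real.sqrt x * π := by
      rw [show (2 * π * x : ℝ) = ((2/π) * x) * π^2 by field_simp]
      rw [Real.sqrt_mul (by positivity), Real.sqrt_mul (by positivity), Real.sqrt_sq hπ.le]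
    rw [hsqrt]
    ring
  -- value of the limit
  have hL : Real.sqrt (2/π) * ∫ t in Set.Ioi (0:ℝ), Real.exp (-((1:ℝ)/2 * t^2)) = 1 := by
    have h1 : (∫ t in Set.Ioi (0:ℝ), Real.exp (-((1:ℝ)/2 * t^2)))
        = Real.sqrt (π / (1/2)) / 2 := by
      rw [← integral_gaussian_Ioi (1/2)]
      congr 1
      funext t
      rw [neg_mul]
    rw [h1, show π / ((1:ℝ)/2) = 2 * π by ring]
    have h2 : Real.sqrt (2/π) * Real.sqrt (2*π) = 2 := by
      rw [← Real.sqrt_mul (by positivity), show (2/π)*(2*π) = 4 by field_simp; ring,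
        show (4:ℝ) = 2^2 by norm_num, Real.sqrt_sq (by norm_num)]
    rw [← mul_div_assoc, h2]
    norm_num
  have := (key.const_mul (Real.sqrt (2/π)))
  rw [hL] at this
  exact Tendsto.congr' (Filter.EventuallyEq.symm hF) this
end
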